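/- Let r ≥ 3 be an odd integer, let ε₁, ε₂ ∈ (0,1), and let z ∈ ℂ satisfy −π/r < Re z < π + π/r. Then the value of the contour integral defining the quantum dilogarithm is independent of the radius of the semicircular detour: ( ∫_{−∞}^{−ε₁} f_z(x) dx + ∫_0^π f_z(ε₁ e^{i(π−t)})·(−i ε₁ e^{i(π−t)}) dt + ∫_{ε₁}^∞ f_z(x) dx ) = ( ∫_{−∞}^{−ε₂} f_z(x) dx + ∫_0^π f_z(ε₂ e^{i(π−t)})·(−i ε₂ e^{i(π−t)}) dt + ∫_{ε₂}^∞ f_z(x) dx ), where f_z(w) = e^{(2z−π)w}/(4w·sinh(πw)·sinh(2πw/r)). -/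

import Mathlib

open MeasureTheory intervalIntegral

/-- The integrand in the contour-integral definition of the quantum dilogarithm. -/
noncomputable def qdInt (r : ℕ) (z w : ℂ) : ℂ :=
  Complex.exp ((2 * z - (Real.pi : ℂ)) * w) /
    (4 * w * Complex.sinh ((Real.pi : ℂ) * w) * Complex.sinh (2 * (Real.pi : ℂ) * w / (r : ℂ)))

/-- The contour integral over `Ω = (−∞,−ε] ∪ {|x|=ε, Im x > 0} ∪ [ε,∞)`, the semicircle
being parameterized by `γ(t) = ε e^{i(π−t)}`, `t ∈ [0,π]`. -/
noncomputable def qdContour (r : ℕ) (ε : ℝ) (z : ℂ) : ℂ :=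
  (∫ x in Set.Iic (-ε), qdInt r z (x : ℂ)) +
  (∫ t in (0:ℝ)..Real.pi,
      qdInt r z ((ε : ℂ) * Complex.exp (Complex.I * ((Real.pi : ℂ) - (t : ℂ)))) *
        (-Complex.I * (ε : ℂ) * Complex.exp (Complex.I * ((Real.pi : ℂ) - (t : ℂ))))) +
  (∫ x in Set.Ici ε, qdInt r z (x : ℂ))

lemma csinh_eq_zero_iff (w : ℂ) : Complex.sinh w = 0 ↔ ∃ n : ℤ, w = (n : ℂ) * Real.pi * Complex.I := by
  constructor
  · intro h
    have h2 : Complex.sin (w * Complex.I) = 0 := by rw [Complex.sin_mul_I, h, zero_mul]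
    obtain ⟨k, hk⟩ := Complex.sin_eq_zero_iff.mp h2
    refine ⟨-k, ?_⟩
    have h3 : w * Complex.I * (-Complex.I) = ((k : ℂ) * Real.pi) * (-Complex.I) := by rw [hk]
    have h4 : w = (k : ℂ) * Real.pi * (-Complex.I) := by
      have : w * (Complex.I * -Complex.I) = (k : ℂ) * Real.pi * (-Complex.I) := by
        rw [← mul_assoc]; exact h3
      simpa [Complex.I_mul_I] using this
    rw [h4]; push_cast; ring
  · rintro ⟨n, rfl⟩
    have : (n : ℂ) * Real.pi * Complex.I = ((n : ℂ) * Real.pi) * Complex.I := by ring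
    rw [this, Complex.sinh_mul_I]
    have : Complex.sin ((n : ℂ) * Real.pi) = 0 := Complex.sin_eq_zero_iff.mpr ⟨n, rfl⟩
    rw [this, zero_mul]

lemma qd_denom_ne (r : ℕ) (hr3 : 3 ≤ r) {w : ℂ} (hw : w ≠ 0)
    (h : w.re ≠ 0 ∨ ‖w‖ < 1) :
    4 * w * Complex.sinh ((Real.pi : ℂ) * w) * Complex.sinh (2 * (Real.pi : ℂ) * w / (r : ℂ)) ≠ 0 := by
  have hπ : (Real.pi : ℂ) ≠ 0 := by
    exact_mod_cast Real.pi_ne_zero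
  have hrne : (r : ℂ) ≠ 0 := by
    exact_mod_cast (by omega : r ≠ 0)
  have h1 : Complex.sinh ((Real.pi : ℂ) * w) ≠ 0 := by
    intro h0
    obtain ⟨n, hn⟩ := (csinh_eq_zero_iff _).mp h0
    have hwn : w = (n : ℂ) * Complex.I := by
      apply mul_left_cancel₀ hπ
      linear_combination hn
    have hn0 : n ≠ 0 := by
      rintro rfl; simp at hwn; exact hw hwn
    rcases h with hre | habs
    · apply hre; rw [hwn]; simp
    · rw [hwn] at habs
      simp only [norm_mul, Complex.norm_intCast, Complex.norm_I, mul_one] at habs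
      have : (1 : ℝ) ≤ |(n : ℝ)| := by
        exact_mod_cast Int.one_le_abs (by exact_mod_cast hn0)
      linarith
  have h2 : Complex.sinh (2 * (Real.pi : ℂ) * w / (r : ℂ)) ≠ 0 := by
    intro h0
    obtain ⟨n, hn⟩ := (csinh_eq_zero_iff _).mp h0
    have hwn : w = (n : ℂ) * (r : ℂ) / 2 * Complex.I := by
      have key := congrArg (· * (r : ℂ)) hn
      simp only [div_mul_cancel₀ _ hrne] at key
      have h2π : (2 : ℂ) * (Real.pi : ℂ) ≠ 0 := by
        simpa using hπ
      apply mul_left_cancel₀ h2π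
      linear_combination key
    have hn0 : n ≠ 0 := by
      rintro rfl; simp at hwn; exact hw hwn
    rcases h with hre | habs
    · apply hre; rw [hwn]; simp
    · rw [hwn] at habs
      have : ‖(n : ℂ) * (r : ℂ) / 2 * Complex.I‖ = |(n : ℝ)| * r / 2 := by
        simp only [norm_mul, norm_div, Complex.norm_intCast, Complex.norm_natCast, Complex.norm_I,
          Complex.norm_ofNat, mul_one]
      rw [this] at habs
      have h1n : (1 : ℝ) ≤ |(n : ℝ)| := by
        exact_mod_cast Int.one_le_abs (by exact_mod_cast hn0)
      have h3r : (3 : ℝ) ≤ (r : ℝ) := by exact_mod_cast hr3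
      nlinarith
  have h4 : (4 : ℂ) ≠ 0 := by norm_num
  exact mul_ne_zero (mul_ne_zero (mul_ne_zero h4 hw) h1) h2

lemma qd_diffAt (r : ℕ) (hr3 : 3 ≤ r) (z : ℂ) {w : ℂ} (hw : w ≠ 0) (h : ‖w‖ < 1) :
    DifferentiableAt ℂ (qdInt r z) w := by
  have h1 : DifferentiableAt ℂ (fun w : ℂ => Complex.exp ((2 * z - (Real.pi : ℂ)) * w)) w :=
    ((differentiableAt_id.const_mul (2 * z - (Real.pi : ℂ)))).cexp
  have h2 : DifferentiableAt ℂ (fun w : ℂ =>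
      4 * w * Complex.sinh ((Real.pi : ℂ) * w) * Complex.sinh (2 * (Real.pi : ℂ) * w / (r : ℂ))) w := by
    apply DifferentiableAt.mul
    apply DifferentiableAt.mul
    · exact differentiableAt_id.const_mul 4
    · exact (differentiableAt_id.const_mul ((Real.pi : ℂ))).csinh
    · exact ((differentiableAt_id.const_mul (2 * (Real.pi : ℂ))).div_const (r : ℂ)).csinh
  have := h1.div h2 (qd_denom_ne r hr3 hw (Or.inr h))
  exact this

lemma qd_continuousAt_real (r : ℕ) (hr3 : 3 ≤ r) (z : ℂ) {x : ℝ} (hx : x ≠ 0) :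
    ContinuousAt (fun t : ℝ => qdInt r z (t : ℂ)) x := by
  have hw : ((x : ℂ)) ≠ 0 := by exact_mod_cast hx
  have hden := qd_denom_ne r hr3 hw (Or.inl (by simpa using hx))
  apply ContinuousAt.div
  · exact (Complex.continuous_exp.comp ((continuous_const.mul Complex.continuous_ofReal))).continuousAt
  · apply ContinuousAt.mul
    apply ContinuousAt.mul
    · exact (continuous_const.mul Complex.continuous_ofReal).continuousAt
    · exact (Complex.continuous_sinh.comp (continuous_const.mul Complex.continuous_ofReal)).continuousAt
    · exact (Complex.continuous_sinh.comp ((continuous_const.mul Complex.continuous_ofReal).div_const _)).continuousAt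
  · exact hden

lemma norm_qdInt_ofReal (r : ℕ) (z : ℂ) (x : ℝ) :
    ‖qdInt r z (x : ℂ)‖ =
      Real.exp ((2 * z.re - Real.pi) * x) /
        |4 * x * Real.sinh (Real.pi * x) * Real.sinh (2 * Real.pi * x / r)| := by
  unfold qdInt
  rw [norm_div, Complex.norm_exp]
  congr 1
  · congr 1
    simp [Complex.mul_re, Complex.sub_re, Complex.sub_im, Complex.mul_im]
  · rw [show (4 * (x : ℂ) * Complex.sinh ((Real.pi : ℂ) * (x : ℂ)) *
        Complex.sinh (2 * (Real.pi : ℂ) * (x : ℂ) / (r : ℂ))) =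
        (((4 * x * Real.sinh (Real.pi * x) * Real.sinh (2 * Real.pi * x / r) : ℝ)) : ℂ) by
      push_cast; ring_nf]
    exact Complex.norm_real _

lemma sinh_lower {t₀ t : ℝ} (h0 : 0 < t₀) (ht : t₀ ≤ t) :
    (1 - Real.exp (-2 * t₀)) / 2 * Real.exp t ≤ Real.sinh t := by
  rw [Real.sinh_eq]
  have h1 : Real.exp (-t) = Real.exp t * Real.exp (-2 * t) := by
    rw [← Real.exp_add]; congr 1; ring
  have h2 : Real.exp (-2 * t) ≤ Real.exp (-2 * t₀) := Real.exp_le_exp.mpr (by linarith)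
  nlinarith [Real.exp_pos t]

lemma qd_integr_aux {ε δ C0 : ℝ} (hδ : 0 < δ)
    {f : ℝ → ℂ} (hcont : ContinuousOn f (Set.Ioi ε))
    (hbd : ∀ x, ε ≤ x → ‖f x‖ ≤ (1 / C0) * Real.exp (-δ * x)) :
    IntegrableOn f (Set.Ici ε) := by
  rw [integrableOn_Ici_iff_integrableOn_Ioi]
  refine Integrable.mono' ((exp_neg_integrableOn_Ioi ε hδ).const_mul (1 / C0))
    (hcont.aestronglyMeasurable measurableSet_Ioi) ?_
  filter_upwards [ae_restrict_mem measurableSet_Ioi] with x hx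
  exact hbd x (le_of_lt hx)

lemma qd_denom_lower (r : ℕ) (hr3 : 3 ≤ r) {ε x : ℝ} (hε : 0 < ε) (hx : ε ≤ x) :
    (4 * ε * ((1 - Real.exp (-2 * (Real.pi * ε))) / 2) *
        ((1 - Real.exp (-2 * (2 * Real.pi * ε / r))) / 2)) *
      Real.exp ((Real.pi + 2 * Real.pi / r) * x)
      ≤ 4 * x * Real.sinh (Real.pi * x) * Real.sinh (2 * Real.pi * x / r) := by
  have hr0 : (0 : ℝ) < r := by positivity
  have hπ := Real.pi_pos
  have ht1 : (0:ℝ) < Real.pi * ε := by positivity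
  have ht2 : (0:ℝ) < 2 * Real.pi * ε / r := by positivity
  have s1 := sinh_lower ht1 (by nlinarith : Real.pi * ε ≤ Real.pi * x)
  have s2 := sinh_lower ht2 (by gcongr <;> nlinarith : 2 * Real.pi * ε / r ≤ 2 * Real.pi * x / r)
  have e : Real.exp ((Real.pi + 2 * Real.pi / r) * x)
      = Real.exp (Real.pi * x) * Real.exp (2 * Real.pi * x / r) := by
    rw [← Real.exp_add]; congr 1; field_simp
  have hc1 : (0:ℝ) < (1 - Real.exp (-2 * (Real.pi * ε))) / 2 := by
    have : Real.exp (-2 * (Real.pi * ε)) < 1 := Real.exp_lt_one_iff.mpr (by nlinarith)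
    linarith
  have hc2 : (0:ℝ) < (1 - Real.exp (-2 * (2 * Real.pi * ε / r))) / 2 := by
    have : Real.exp (-2 * (2 * Real.pi * ε / r)) < 1 := Real.exp_lt_one_iff.mpr (by nlinarith)
    linarith
  rw [e]
  have e1 := Real.exp_pos (Real.pi * x)
  have e2 := Real.exp_pos (2 * Real.pi * x / r)
  have key := mul_le_mul s1 s2 (mul_nonneg hc2.le e2.le)
    (le_trans (mul_nonneg hc1.le e1.le) s1)
  calc 4 * ε * ((1 - Real.exp (-2 * (Real.pi * ε))) / 2) *
        ((1 - Real.exp (-2 * (2 * Real.pi * ε / r))) / 2) *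
      (Real.exp (Real.pi * x) * Real.exp (2 * Real.pi * x / r))
      = (4 * ε) * (((1 - Real.exp (-2 * (Real.pi * ε))) / 2 * Real.exp (Real.pi * x)) *
        ((1 - Real.exp (-2 * (2 * Real.pi * ε / r))) / 2 * Real.exp (2 * Real.pi * x / r))) := by
        ring
    _ ≤ (4 * x) * (Real.sinh (Real.pi * x) * Real.sinh (2 * Real.pi * x / r)) := by
        apply mul_le_mul (by linarith) key ?_ (by linarith)
        exact mul_nonneg (mul_nonneg hc1.le e1.le) (mul_nonneg hc2.le e2.le)
    _ = 4 * x * Real.sinh (Real.pi * x) * Real.sinh (2 * Real.pi * x / r) := by ring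

lemma qd_integrableOn_Ici (r : ℕ) (hr3 : 3 ≤ r) (z : ℂ) {ε : ℝ} (hε : 0 < ε)
    (h2 : z.re < Real.pi + Real.pi / r) :
    IntegrableOn (fun x : ℝ => qdInt r z (x : ℂ)) (Set.Ici ε) := by
  have hr0 : (0 : ℝ) < r := by positivity
  have hπ := Real.pi_pos
  set C0 : ℝ := 4 * ε * ((1 - Real.exp (-2 * (Real.pi * ε))) / 2) *
      ((1 - Real.exp (-2 * (2 * Real.pi * ε / r))) / 2) with hC0def
  have hc1 : (0:ℝ) < (1 - Real.exp (-2 * (Real.pi * ε))) / 2 := by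
    have : Real.exp (-2 * (Real.pi * ε)) < 1 := Real.exp_lt_one_iff.mpr (by nlinarith)
    linarith
  have hc2 : (0:ℝ) < (1 - Real.exp (-2 * (2 * Real.pi * ε / r))) / 2 := by
    have h' : (0:ℝ) < 2 * Real.pi * ε / r := by positivity
    have : Real.exp (-2 * (2 * Real.pi * ε / r)) < 1 := Real.exp_lt_one_iff.mpr (by linarith)
    linarith
  have hC0 : 0 < C0 := by rw [hC0def]; positivity
  set δ : ℝ := 2 * Real.pi + 2 * Real.pi / r - 2 * z.re with hδdef
  have hδ : 0 < δ := by
    rw [hδdef, show 2 * Real.pi / (r:ℝ) = 2 * (Real.pi / r) by ring]; linarith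
  apply qd_integr_aux (C0 := C0) hδ
  · intro x hx
    exact (qd_continuousAt_real r hr3 z (ne_of_gt (lt_trans hε hx))).continuousWithinAt
  · intro x hx
    have hxpos : 0 < x := lt_of_lt_of_le hε hx
    have hs1 : 0 < Real.sinh (Real.pi * x) := Real.sinh_pos_iff.mpr (by positivity)
    have hs2 : 0 < Real.sinh (2 * Real.pi * x / r) := Real.sinh_pos_iff.mpr (by positivity)
    have hD : 0 < 4 * x * Real.sinh (Real.pi * x) * Real.sinh (2 * Real.pi * x / r) := by
      have : (0:ℝ) < 4 * x := by linarith
      exact mul_pos (mul_pos this hs1) hs2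
    rw [norm_qdInt_ofReal, abs_of_pos hD]
    have hlow := qd_denom_lower r hr3 hε hx
    have hEpos : 0 < C0 * Real.exp ((Real.pi + 2 * Real.pi / r) * x) := by positivity
    calc Real.exp ((2 * z.re - Real.pi) * x) /
          (4 * x * Real.sinh (Real.pi * x) * Real.sinh (2 * Real.pi * x / r))
        ≤ Real.exp ((2 * z.re - Real.pi) * x) /
          (C0 * Real.exp ((Real.pi + 2 * Real.pi / r) * x)) :=
          div_le_div_of_nonneg_left (Real.exp_pos _).le hEpos hlow
      _ = 1 / C0 * Real.exp (-δ * x) := by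
          rw [show (2 * z.re - Real.pi) * x
              = -δ * x + (Real.pi + 2 * Real.pi / r) * x by rw [hδdef]; ring,
            Real.exp_add]
          field_simp

lemma qd_integrableOn_Iic (r : ℕ) (hr3 : 3 ≤ r) (z : ℂ) {ε : ℝ} (hε : 0 < ε)
    (h1 : -Real.pi / r < z.re) :
    IntegrableOn (fun x : ℝ => qdInt r z (x : ℂ)) (Set.Iic (-ε)) := by
  have hr0 : (0 : ℝ) < r := by positivity
  have hπ := Real.pi_pos
  refine ((Measure.measurePreserving_neg (volume : Measure ℝ)).integrableOn_comp_preimage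
      (Homeomorph.neg ℝ).measurableEmbedding).mp ?_
  rw [show (Neg.neg ⁻¹' Set.Iic (-ε) : Set ℝ) = Set.Ici ε from by ext x; simp]
  simp only [Function.comp_def]
  set C0 : ℝ := 4 * ε * ((1 - Real.exp (-2 * (Real.pi * ε))) / 2) *
      ((1 - Real.exp (-2 * (2 * Real.pi * ε / r))) / 2) with hC0def
  have hc1 : (0:ℝ) < (1 - Real.exp (-2 * (Real.pi * ε))) / 2 := by
    have h' : (0:ℝ) < Real.pi * ε := by positivity
    have : Real.exp (-2 * (Real.pi * ε)) < 1 := Real.exp_lt_one_iff.mpr (by linarith)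
    linarith
  have hc2 : (0:ℝ) < (1 - Real.exp (-2 * (2 * Real.pi * ε / r))) / 2 := by
    have h' : (0:ℝ) < 2 * Real.pi * ε / r := by positivity
    have : Real.exp (-2 * (2 * Real.pi * ε / r)) < 1 := Real.exp_lt_one_iff.mpr (by linarith)
    linarith
  have hC0 : 0 < C0 := by rw [hC0def]; positivity
  set δ : ℝ := 2 * z.re + 2 * Real.pi / r with hδdef
  have hδ : 0 < δ := by
    rw [hδdef, show 2 * Real.pi / (r:ℝ) = 2 * (Real.pi / r) by ring]
    have : -(Real.pi / r) < z.re := by rwa [neg_div] at h1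
    linarith
  apply qd_integr_aux (C0 := C0) hδ
  · intro x hx
    have hx0 : (0:ℝ) < x := lt_trans hε hx
    have : ContinuousAt (fun t : ℝ => qdInt r z ((-t : ℝ) : ℂ)) x := by
      have hc := qd_continuousAt_real r hr3 z (x := -x) (by simp [ne_of_gt hx0])
      exact hc.comp (continuous_neg.continuousAt)
    exact (this.congr (by
      filter_upwards with t
      push_cast
      ring_nf)).continuousWithinAt
  · intro x hx
    have hxpos : 0 < x := lt_of_lt_of_le hε hx
    have hs1 : 0 < Real.sinh (Real.pi * x) := Real.sinh_pos_iff.mpr (by positivity)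
    have hs2 : 0 < Real.sinh (2 * Real.pi * x / r) := Real.sinh_pos_iff.mpr (by positivity)
    have hD : 0 < 4 * x * Real.sinh (Real.pi * x) * Real.sinh (2 * Real.pi * x / r) := by
      have : (0:ℝ) < 4 * x := by linarith
      exact mul_pos (mul_pos this hs1) hs2
    have habs : ‖qdInt r z ((-x : ℝ) : ℂ)‖
        = Real.exp ((2 * z.re - Real.pi) * (-x)) /
          (4 * x * Real.sinh (Real.pi * x) * Real.sinh (2 * Real.pi * x / r)) := by
      rw [norm_qdInt_ofReal,
        show 4 * (-x) * Real.sinh (Real.pi * (-x)) * Real.sinh (2 * Real.pi * (-x) / r)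
          = -(4 * x * Real.sinh (Real.pi * x) * Real.sinh (2 * Real.pi * x / r)) by
          rw [show Real.pi * (-x) = -(Real.pi * x) by ring,
            show 2 * Real.pi * (-x) / r = -(2 * Real.pi * x / r) by ring,
            Real.sinh_neg, Real.sinh_neg]; ring,
        abs_neg, abs_of_pos hD]
    rw [habs]
    have hlow := qd_denom_lower r hr3 hε hx
    have hEpos : 0 < C0 * Real.exp ((Real.pi + 2 * Real.pi / r) * x) := by positivity
    calc Real.exp ((2 * z.re - Real.pi) * (-x)) /
          (4 * x * Real.sinh (Real.pi * x) * Real.sinh (2 * Real.pi * x / r))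
        ≤ Real.exp ((2 * z.re - Real.pi) * (-x)) /
          (C0 * Real.exp ((Real.pi + 2 * Real.pi / r) * x)) :=
          div_le_div_of_nonneg_left (Real.exp_pos _).le hEpos hlow
      _ = 1 / C0 * Real.exp (-δ * x) := by
          rw [show (2 * z.re - Real.pi) * (-x)
              = -δ * x + (Real.pi + 2 * Real.pi / r) * x by rw [hδdef]; ring,
            Real.exp_add]
          field_simp

theorem qdContour_indep_radius (r : ℕ) (hr3 : 3 ≤ r) (hrodd : Odd r)
    (ε₁ ε₂ : ℝ) (hε₁ : ε₁ ∈ Set.Ioo (0 : ℝ) 1) (hε₂ : ε₂ ∈ Set.Ioo (0 : ℝ) 1) (z : ℂ)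
    (hre1 : -Real.pi / r < z.re) (hre2 : z.re < Real.pi + Real.pi / r) :
    qdContour r ε₁ z = qdContour r ε₂ z := by
  wlog hle : ε₁ ≤ ε₂ generalizing ε₁ ε₂
  · exact (this ε₂ ε₁ hε₂ hε₁ (le_of_not_ge hle)).symm
  obtain ⟨h10, h11⟩ := hε₁
  obtain ⟨h20, h21⟩ := hε₂
  -- integrability of the real-axis pieces
  have hIic1 := qd_integrableOn_Iic r hr3 z h10 hre1
  have hIic2 := qd_integrableOn_Iic r hr3 z h20 hre1
  have hIci1 := qd_integrableOn_Ici r hr3 z h10 hre2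
  have hIci2 := qd_integrableOn_Ici r hr3 z h20 hre2
  have hIicDiff : (∫ x in Set.Iic (-ε₁), qdInt r z (x:ℂ)) - (∫ x in Set.Iic (-ε₂), qdInt r z (x:ℂ))
      = ∫ x in (-ε₂)..(-ε₁), qdInt r z (x:ℂ) := integral_Iic_sub_Iic hIic2 hIic1
  have hIciDiff : (∫ x in Set.Ici ε₁, qdInt r z (x:ℂ)) - (∫ x in Set.Ici ε₂, qdInt r z (x:ℂ))
      = ∫ x in ε₁..ε₂, qdInt r z (x:ℂ) := by
    rw [integral_Ici_eq_integral_Ioi, integral_Ici_eq_integral_Ioi,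
      ← Set.Ioc_union_Ioi_eq_Ioi hle,
      setIntegral_union (Set.Ioc_disjoint_Ioi le_rfl) measurableSet_Ioi
        (hIci1.mono_set (fun x hx => le_of_lt hx.1))
        (hIci2.mono_set (fun x hx => Set.mem_Ici.mpr (le_of_lt hx))),
      intervalIntegral.integral_of_le hle]
    ring
  -- the rectangle
  set a := Real.log ε₁ with hadef
  set b := Real.log ε₂ with hbdef
  have hea : Real.exp a = ε₁ := Real.exp_log h10
  have heb : Real.exp b = ε₂ := Real.exp_log h20
  have ha0 : a < 0 := Real.log_neg h10 h11
  have hb0 : b < 0 := Real.log_neg h20 h21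
  set g : ℂ → ℂ := fun u => qdInt r z (Complex.exp u) * Complex.exp u with hgdef
  have hdiffOpen : DifferentiableOn ℂ g {u : ℂ | u.re < 0} := by
    intro u hu
    have h1 : ‖Complex.exp u‖ < 1 := by
      rw [Complex.norm_exp]; exact Real.exp_lt_one_iff.mpr hu
    exact (((qd_diffAt r hr3 z (Complex.exp_ne_zero u) h1).comp u
      Complex.differentiable_exp.differentiableAt).mul
      Complex.differentiable_exp.differentiableAt).differentiableWithinAt
  have hsub : (Set.uIcc ((a:ℂ)).re (((b:ℂ) + (Real.pi:ℂ) * Complex.I)).re ×ℂ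
      Set.uIcc ((a:ℂ)).im (((b:ℂ) + (Real.pi:ℂ) * Complex.I)).im) ⊆ {u : ℂ | u.re < 0} := by
    intro u hu
    rw [Complex.mem_reProdIm] at hu
    have h1 := hu.1
    simp only [Complex.ofReal_re, Complex.add_re, Complex.mul_re, Complex.I_re, Complex.I_im,
      Complex.ofReal_im, mul_zero, mul_one, zero_sub, sub_zero, add_zero, zero_mul] at h1
    have := (Set.mem_uIcc.mp h1)
    rcases this with ⟨_, h⟩ | ⟨_, h⟩ <;> simp only [Set.mem_setOf_eq] <;> linarith
  have hrect := Complex.integral_boundary_rect_eq_zero_of_differentiableOn g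
    ((a : ℂ)) ((b : ℂ) + (Real.pi : ℂ) * Complex.I) (hdiffOpen.mono hsub)
  simp only [Complex.ofReal_re, Complex.add_re, Complex.mul_re, Complex.I_re, Complex.I_im,
    Complex.ofReal_im, Complex.add_im, Complex.mul_im, mul_zero, mul_one, zero_sub, sub_zero,
    add_zero, zero_mul, zero_add, neg_zero, Complex.ofReal_zero, zero_mul] at hrect
  -- bottom edge
  have himg1 : ContinuousOn (fun t : ℝ => qdInt r z (t : ℂ)) (Real.exp '' Set.uIcc a b) := by
    rintro t ⟨s, -, rfl⟩
    exact (qd_continuousAt_real r hr3 z (ne_of_gt (Real.exp_pos s))).continuousWithinAt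
  have hsub1 := intervalIntegral.integral_comp_smul_deriv' (f := Real.exp) (f' := Real.exp)
    (g := fun t : ℝ => qdInt r z (t : ℂ)) (a := a) (b := b)
    (fun x _ => Real.hasDerivAt_exp x) Real.continuous_exp.continuousOn himg1
  rw [hea, heb] at hsub1
  have hBot : (∫ x in a..b, g ((x : ℝ) : ℂ)) = ∫ t in ε₁..ε₂, qdInt r z (t : ℂ) := by
    rw [← hsub1]
    apply intervalIntegral.integral_congr
    intro x _
    simp only [hgdef, Function.comp_apply]
    rw [Complex.real_smul, ← Complex.ofReal_exp]
    ring
  -- top edge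
  have himg2 : ContinuousOn (fun t : ℝ => qdInt r z ((-t : ℝ) : ℂ)) (Real.exp '' Set.uIcc a b) := by
    rintro t ⟨s, -, rfl⟩
    have hne : -Real.exp s ≠ 0 := by simpa using ne_of_gt (Real.exp_pos s)
    exact ((qd_continuousAt_real r hr3 z hne).comp
      continuous_neg.continuousAt).continuousWithinAt
  have hsub2 := intervalIntegral.integral_comp_smul_deriv' (f := Real.exp) (f' := Real.exp)
    (g := fun t : ℝ => qdInt r z ((-t : ℝ) : ℂ)) (a := a) (b := b)
    (fun x _ => Real.hasDerivAt_exp x) Real.continuous_exp.continuousOn himg2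
  rw [hea, heb] at hsub2
  have hTop : (∫ x in a..b, g ((x : ℂ) + (Real.pi : ℂ) * Complex.I))
      = -∫ t in (-ε₂)..(-ε₁), qdInt r z (t : ℂ) := by
    have key : ∀ x : ℝ, g ((x : ℂ) + (Real.pi : ℂ) * Complex.I)
        = -(Real.exp x • ((fun t : ℝ => qdInt r z ((-t : ℝ) : ℂ)) ∘ Real.exp) x) := by
      intro x
      simp only [hgdef, Function.comp_apply]
      rw [Complex.exp_add, Complex.exp_pi_mul_I, Complex.real_smul, Complex.ofReal_neg,
        Complex.ofReal_exp]
      simp only [mul_neg_one]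
      ring
    rw [intervalIntegral.integral_congr (fun x _ => key x), intervalIntegral.integral_neg,
      hsub2]
    congr 1
    exact intervalIntegral.integral_comp_neg (fun t : ℝ => qdInt r z (t : ℂ))
  -- semicircles
  have hS : ∀ (ε : ℝ), 0 < ε →
      (∫ t in (0:ℝ)..Real.pi,
        qdInt r z ((ε : ℂ) * Complex.exp (Complex.I * ((Real.pi : ℂ) - (t : ℂ)))) *
          (-Complex.I * (ε : ℂ) * Complex.exp (Complex.I * ((Real.pi : ℂ) - (t : ℂ)))))
      = -Complex.I * ∫ y in (0:ℝ)..Real.pi, g ((Real.log ε : ℂ) + (y : ℂ) * Complex.I) := by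
    intro ε hε
    have key : ∀ t : ℝ,
        qdInt r z ((ε : ℂ) * Complex.exp (Complex.I * ((Real.pi : ℂ) - (t : ℂ)))) *
          (-Complex.I * (ε : ℂ) * Complex.exp (Complex.I * ((Real.pi : ℂ) - (t : ℂ))))
        = -Complex.I * g ((Real.log ε : ℂ) + ((Real.pi - t : ℝ) : ℂ) * Complex.I) := by
      intro t
      simp only [hgdef]
      have harg : Complex.exp ((Real.log ε : ℂ) + ((Real.pi - t : ℝ) : ℂ) * Complex.I)
          = (ε : ℂ) * Complex.exp (Complex.I * ((Real.pi : ℂ) - (t : ℂ))) := by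
        rw [Complex.exp_add, ← Complex.ofReal_exp, Real.exp_log hε]
        congr 1
        push_cast
        ring
      rw [harg]
      ring
    rw [intervalIntegral.integral_congr (fun t _ => key t)]
    have hcs := intervalIntegral.integral_comp_sub_left
      (fun s : ℝ => -Complex.I * g ((Real.log ε : ℂ) + (s : ℂ) * Complex.I)) Real.pi
      (a := (0:ℝ)) (b := Real.pi)
    simp only [sub_self, sub_zero] at hcs
    rw [hcs, intervalIntegral.integral_const_mul]
  have hS1 := hS ε₁ h10
  have hS2 := hS ε₂ h20
  rw [← hadef] at hS1
  rw [← hbdef] at hS2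
  have hVa : Complex.I • (∫ y in (0:ℝ)..Real.pi, g ((a : ℂ) + (y : ℂ) * Complex.I))
      = -(∫ t in (0:ℝ)..Real.pi,
        qdInt r z ((ε₁ : ℂ) * Complex.exp (Complex.I * ((Real.pi : ℂ) - (t : ℂ)))) *
          (-Complex.I * (ε₁ : ℂ) * Complex.exp (Complex.I * ((Real.pi : ℂ) - (t : ℂ))))) := by
    rw [smul_eq_mul]
    linear_combination hS1
  have hVb : Complex.I • (∫ y in (0:ℝ)..Real.pi, g ((b : ℂ) + (y : ℂ) * Complex.I))
      = -(∫ t in (0:ℝ)..Real.pi,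
        qdInt r z ((ε₂ : ℂ) * Complex.exp (Complex.I * ((Real.pi : ℂ) - (t : ℂ)))) *
          (-Complex.I * (ε₂ : ℂ) * Complex.exp (Complex.I * ((Real.pi : ℂ) - (t : ℂ))))) := by
    rw [smul_eq_mul]
    linear_combination hS2
  rw [hBot, hTop, hVa, hVb] at hrect
  simp only [qdContour]
  linear_combination hIicDiff + hIciDiff + hrect
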